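/- Let d ≥ 1, G ≥ 0, k ≥ 1 be integers with 2d ≥ 2G - 2 + k, and suppose r_0, n_0, n_b, n_r are nonnegative integers and ν_1,...,ν_{l_0} integers with ν_i ≥ 2, satisfying: n_0 + n_b = 2(d + G - 1), k ≥ d·r_0 - n_0, n_r ≤ n_b, and d·l_0 - n_r ≤ Σ_{i=1}^{l_0} d/ν_i. Then ν_g := r_0 + Σ_{i=1}^{l_0} (1 - 1/ν_i) satisfies ν_g ≤ 2 + (2G - 2 + k)/d ≤ 4. -/

import Mathlib

/-- the totally ramified value number bound
ν_g = r₀ + Σ (1 - 1/ν_i) ≤ 2 + (2G - 2 + k)/d ≤ 4. -/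
theorem stmt_3 (d G k : ℤ) (hd : 1 ≤ d) (hG : 0 ≤ G) (hk : 1 ≤ k)
    (hdeg : 2 * d ≥ 2 * G - 2 + k)
    (r₀ n₀ n_b n_r : ℤ) (hr₀ : 0 ≤ r₀) (hn₀ : 0 ≤ n₀) (hnb : 0 ≤ n_b) (hnr : 0 ≤ n_r)
    (l₀ : ℕ) (ν : Fin l₀ → ℤ) (hν : ∀ i, 2 ≤ ν i)
    (hRH : n₀ + n_b = 2 * (d + G - 1))
    (hk' : k ≥ d * r₀ - n₀)
    (hrb : n_r ≤ n_b)
    (hcount : (d : ℚ) * l₀ - n_r ≤ ∑ i, (d : ℚ) / (ν i : ℚ)) :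
    (r₀ : ℚ) + ∑ i, (1 - 1 / (ν i : ℚ)) ≤ 2 + ((2 * G - 2 + k : ℤ) : ℚ) / (d : ℚ) ∧
    (2 : ℚ) + ((2 * G - 2 + k : ℤ) : ℚ) / (d : ℚ) ≤ 4 := by
  have hd' : (0:ℚ) < (d:ℚ) := by exact_mod_cast hd.trans_lt' (by norm_num)
  have h1 : (d:ℚ) * ∑ i, (1 - 1/(ν i:ℚ)) = (d:ℚ) * l₀ - ∑ i, (d:ℚ)/(ν i:ℚ) := by
    rw [Finset.mul_sum]
    simp [mul_sub, Finset.sum_sub_distrib, Finset.card_univ, mul_comm, div_eq_mul_inv]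
  have hkq : ((k:ℚ)) ≥ (d:ℚ) * r₀ - n₀ := by exact_mod_cast hk'
  have hRHq : (n₀:ℚ) + n_b = 2 * ((d:ℚ) + G - 1) := by exact_mod_cast hRH
  have hrbq : (n_r:ℚ) ≤ n_b := by exact_mod_cast hrb
  have key : (d:ℚ) * ((r₀:ℚ) + ∑ i, (1 - 1/(ν i:ℚ)))
      ≤ 2 * (d:ℚ) + ((2 * G - 2 + k : ℤ) : ℚ) := by
    rw [mul_add, h1]
    push_cast
    linarith
  have hdiv : (d:ℚ) * (2 + ((2 * G - 2 + k : ℤ) : ℚ) / (d:ℚ))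
      = 2 * (d:ℚ) + ((2 * G - 2 + k : ℤ) : ℚ) := by
    field_simp
  constructor
  · rw [← mul_le_mul_iff_right₀ hd', hdiv]; exact key
  · have : ((2 * G - 2 + k : ℤ) : ℚ) / (d:ℚ) ≤ 2 := by
      rw [div_le_iff₀ hd']
      have h2 : (2:ℚ)*G - 2 + k ≤ 2*d := by exact_mod_cast hdeg
      push_cast
      linarith
    linarith
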